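/- The time-dependent variational inequality for the perpetual American put has at most one time-decreasing solution: if V₁, V₂ : (0,∞) × (0,∞) → ℝ both have partial derivatives ∂_t Vᵢ, ∂_S Vᵢ, ∂²_{SS} Vᵢ, are positive, nonincreasing in t, satisfy min{(−LVᵢ)(S,t), Vᵢ(S,t) − max(E−S,0)} = 0 for all S > 0 and t > 0, and satisfy Vᵢ(S,t) → E as S → 0⁺ and Vᵢ(S,t) → 0 as S → +∞ for every fixed t > 0 (i = 1,2), then V₁ = V₂ on (0,∞) × (0,∞). -/

import Mathlib

/-- The parabolic Black–Scholes operator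
`(−LV)(S,t) = −∂_t V − (σ²/2)·S²·∂²_{SS}V − (r−q)·S·∂_S V + r·V`,
expressed via explicitly given partial derivative functions. -/
noncomputable def negLp (r q σ : ℝ) (V Vt VS VSS : ℝ → ℝ → ℝ) (S t : ℝ) : ℝ :=
  -Vt S t - (σ ^ 2 / 2) * S ^ 2 * VSS S t - (r - q) * S * VS S t + r * V S t

open Filter Set Metric Real

set_option maxHeartbeats 1000000


lemma mvt_le_aux (f g : ℝ → ℝ) (hf : ∀ x, 0 < x → HasDerivAt f (g x) x)
    (hg : ∀ x, 0 < x → g x ≤ 0) {a b : ℝ} (ha : 0 < a) (hab : a ≤ b) : f b ≤ f a := by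
  rcases eq_or_lt_of_le hab with rfl | h
  · exact le_refl _
  · obtain ⟨c, hc, hceq⟩ := exists_hasDerivAt_eq_slope f g h
      (fun x hx => (hf x (lt_of_lt_of_le ha hx.1)).continuousAt.continuousWithinAt)
      (fun x hx => hf x (ha.trans hx.1))
    have hgc := hg c (ha.trans hc.1)
    have hba : (0:ℝ) < b - a := sub_pos.2 h
    have h2 : f b - f a = g c * (b - a) := by
      rw [hceq]; field_simp
    nlinarith

lemma max_second_order (f g h : ℝ → ℝ) (hf : ∀ x, 0 < x → HasDerivAt f (g x) x)
    (hg : ∀ x, 0 < x → HasDerivAt g (h x) x) {c : ℝ} (hc : 0 < c)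
    (hmax : ∀ x, 0 < x → f x ≤ f c) : g c = 0 ∧ h c ≤ 0 := by
  have hloc : IsLocalMax f c := by
    filter_upwards [isOpen_Ioi.mem_nhds (show c ∈ Ioi (0:ℝ) from hc)] with x hx
    exact hmax x hx
  have hg0 : g c = 0 := hloc.hasDerivAt_eq_zero (hf c hc)
  refine ⟨hg0, ?_⟩
  by_contra hcon
  push_neg at hcon
  have hslope : Tendsto (slope g c) (nhdsWithin c {c}ᶜ) (nhds (h c)) :=
    hasDerivAt_iff_tendsto_slope.1 (hg c hc)
  have hev : ∀ᶠ x in nhdsWithin c {c}ᶜ, 0 < slope g c x :=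
    (tendsto_order.1 hslope).1 0 hcon
  obtain ⟨ε, hε, hball⟩ := Metric.mem_nhdsWithin_iff.1 hev
  obtain ⟨m, hm1, hm2⟩ : ∃ m : ℝ, 0 < m ∧ m < ε := ⟨ε/2, by linarith, by linarith⟩
  have hcx₁ : c < c + m := by linarith
  set x₁ := c + m with hx₁
  have hgpos : ∀ x ∈ Ioo c x₁, 0 < g x := by
    intro x hx
    obtain ⟨hxl, hxr⟩ := hx
    have hx0 : 0 < x - c := sub_pos.2 hxl
    have hxb : x ∈ ball c ε ∩ {c}ᶜ := by
      constructor
      · rw [mem_ball, Real.dist_eq, abs_of_pos hx0]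
        have : x < c + m := hxr
        linarith
      · intro hxx
        simp only [mem_singleton_iff] at hxx
        linarith [hxx ▸ hxl]
    have := hball hxb
    simp only [mem_setOf_eq, slope_def_field, hg0, sub_zero] at this
    have := mul_pos this hx0
    rw [div_mul_cancel₀] at this
    · exact this
    · exact ne_of_gt hx0
  obtain ⟨d, hd, hdeq⟩ := exists_hasDerivAt_eq_slope f g hcx₁
    (fun x hx => (hf x (lt_of_lt_of_le hc hx.1)).continuousAt.continuousWithinAt)
    (fun x hx => hf x (hc.trans hx.1))
  have hgd : 0 < g d := hgpos d hd
  have hx₁pos : 0 < x₁ := hc.trans hcx₁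
  have hle : f x₁ ≤ f c := hmax x₁ hx₁pos
  have hba : (0:ℝ) < x₁ - c := sub_pos.2 hcx₁
  rw [hdeq] at hgd
  have := mul_pos hgd hba
  rw [div_mul_cancel₀ _ (ne_of_gt hba)] at this
  linarith

lemma pos_after (f : ℝ → ℝ) {f' s : ℝ} (hf : HasDerivAt f f' s) (h0 : 0 ≤ f s)
    (h' : 0 < f') : ∃ δ > 0, ∀ τ, s < τ → τ < s + δ → 0 < f τ := by
  have hslope : Tendsto (slope f s) (nhdsWithin s {s}ᶜ) (nhds f') :=
    hasDerivAt_iff_tendsto_slope.1 hf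
  have hev : ∀ᶠ x in nhdsWithin s {s}ᶜ, 0 < slope f s x := (tendsto_order.1 hslope).1 0 h'
  obtain ⟨ε, hε, hball⟩ := Metric.mem_nhdsWithin_iff.1 hev
  refine ⟨ε, hε, fun τ hτ1 hτ2 => ?_⟩
  have hτ0 : 0 < τ - s := sub_pos.2 hτ1
  have hmem : τ ∈ ball s ε ∩ {s}ᶜ := by
    constructor
    · rw [mem_ball, Real.dist_eq, abs_of_pos hτ0]; linarith
    · intro hxx
      simp only [mem_singleton_iff] at hxx
      exact absurd hxx (by linarith)
  have := hball hmem
  simp only [mem_setOf_eq, slope_def_field] at this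
  have := mul_pos this hτ0
  rw [div_mul_cancel₀ _ (ne_of_gt hτ0)] at this
  linarith

lemma bounded_of_limits (f : ℝ → ℝ) (E : ℝ) (hc : ∀ x : ℝ, 0 < x → ContinuousAt f x)
    (h0 : Tendsto f (nhdsWithin 0 (Set.Ioi 0)) (nhds E))
    (htop : Tendsto f atTop (nhds 0)) : ∃ M : ℝ, ∀ x, 0 < x → f x ≤ M := by
  have h1 : {x | f x < E + 1} ∈ nhdsWithin (0:ℝ) (Set.Ioi 0) :=
    h0 (by exact Iio_mem_nhds (by linarith) : Iio (E+1) ∈ nhds E)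
  obtain ⟨u, hu, husub⟩ := mem_nhdsGT_iff_exists_Ioo_subset.1 h1
  have h2 : ∀ᶠ x in atTop, f x < 1 := htop (Iio_mem_nhds (by norm_num))
  obtain ⟨b, hb⟩ := h2.exists_forall_of_atTop
  have hune : (u:ℝ)/2 ≤ max b u := le_trans (by linarith [mem_Ioi.1 hu]) (le_max_right _ _)
  have hK : IsCompact (Icc (u/2) (max b u)) := isCompact_Icc
  obtain ⟨xm, hxm, hxmax⟩ := hK.exists_isMaxOn ⟨u/2, le_refl _, hune⟩
    (fun x hx => (hc x (lt_of_lt_of_le (by linarith [mem_Ioi.1 hu]) hx.1)).continuousWithinAt)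
  refine ⟨max (E+1) (max 1 (f xm)), fun x hx => ?_⟩
  rcases lt_or_ge x u with h | h
  · exact le_trans (le_of_lt (husub ⟨hx, h⟩)) (le_max_left _ _)
  · rcases le_or_gt b x with h' | h'
    · exact le_trans (le_of_lt (hb x h')) (le_trans (le_max_left _ _) (le_max_right _ _))
    · have : x ∈ Icc (u/2) (max b u) :=
        ⟨by linarith [mem_Ioi.1 hu], le_trans (le_of_lt h') (le_max_left _ _)⟩
      exact le_trans (hxmax this) (le_trans (le_max_right _ _) (le_max_right _ _))

lemma key_le (r q σ E : ℝ) (hr : 0 < r)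
    (V₁ Vt₁ VS₁ VSS₁ V₂ Vt₂ VS₂ VSS₂ : ℝ → ℝ → ℝ)
    (hd₁ : ∀ S t : ℝ, 0 < S → 0 < t →
      HasDerivAt (fun τ => V₁ S τ) (Vt₁ S t) t ∧
      HasDerivAt (fun s => V₁ s t) (VS₁ S t) S ∧
      HasDerivAt (fun s => VS₁ s t) (VSS₁ S t) S)
    (hd₂ : ∀ S t : ℝ, 0 < S → 0 < t →
      HasDerivAt (fun τ => V₂ S τ) (Vt₂ S t) t ∧
      HasDerivAt (fun s => V₂ s t) (VS₂ S t) S ∧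
      HasDerivAt (fun s => VS₂ s t) (VSS₂ S t) S)
    (hdec₁ : ∀ S t : ℝ, 0 < S → 0 < t → Vt₁ S t ≤ 0)
    (hdec₂ : ∀ S t : ℝ, 0 < S → 0 < t → Vt₂ S t ≤ 0)
    (hVI₁ : ∀ S t : ℝ, 0 < S → 0 < t →
      min (negLp r q σ V₁ Vt₁ VS₁ VSS₁ S t) (V₁ S t - max (E - S) 0) = 0)
    (hVI₂ : ∀ S t : ℝ, 0 < S → 0 < t →
      min (negLp r q σ V₂ Vt₂ VS₂ VSS₂ S t) (V₂ S t - max (E - S) 0) = 0)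
    (hlim0₁ : ∀ t : ℝ, 0 < t →
      Filter.Tendsto (fun S => V₁ S t) (nhdsWithin 0 (Set.Ioi 0)) (nhds E))
    (hlimtop₁ : ∀ t : ℝ, 0 < t →
      Filter.Tendsto (fun S => V₁ S t) Filter.atTop (nhds 0)) :
    ∀ S t : ℝ, 0 < S → 0 < t → V₁ S t ≤ V₂ S t := by
  by_contra hcon
  push_neg at hcon
  obtain ⟨S₀, t₀, hS₀, ht₀, hlt0⟩ := hcon
  -- basic consequences of the VIs
  have hobs₂ : ∀ S t : ℝ, 0 < S → 0 < t → max (E - S) 0 ≤ V₂ S t := by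
    intro S t hS ht
    have h := hVI₂ S t hS ht
    have h2 := min_le_right (negLp r q σ V₂ Vt₂ VS₂ VSS₂ S t) (V₂ S t - max (E - S) 0)
    rw [h] at h2
    linarith
  have hL₂ : ∀ S t : ℝ, 0 < S → 0 < t → 0 ≤ negLp r q σ V₂ Vt₂ VS₂ VSS₂ S t := by
    intro S t hS ht
    have h := hVI₂ S t hS ht
    have h2 := min_le_left (negLp r q σ V₂ Vt₂ VS₂ VSS₂ S t) (V₂ S t - max (E - S) 0)
    rw [h] at h2
    exact h2
  have hanti₁ : ∀ S : ℝ, 0 < S → ∀ a b : ℝ, 0 < a → a ≤ b → V₁ S b ≤ V₁ S a := by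
    intro S hS a b ha hab
    exact mvt_le_aux (fun τ => V₁ S τ) (fun τ => Vt₁ S τ)
      (fun τ hτ => (hd₁ S τ hS hτ).1) (fun τ hτ => hdec₁ S τ hS hτ) ha hab
  have hanti₂ : ∀ S : ℝ, 0 < S → ∀ a b : ℝ, 0 < a → a ≤ b → V₂ S b ≤ V₂ S a := by
    intro S hS a b ha hab
    exact mvt_le_aux (fun τ => V₂ S τ) (fun τ => Vt₂ S τ)
      (fun τ hτ => (hd₂ S τ hS hτ).1) (fun τ hτ => hdec₂ S τ hS hτ) ha hab
  set m₀ := V₁ S₀ t₀ - V₂ S₀ t₀ with hm₀def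
  have hm₀ : 0 < m₀ := sub_pos.2 hlt0
  -- global upper bound on V₁ at slice t₀
  obtain ⟨M, hM⟩ := bounded_of_limits (fun S => V₁ S t₀) E
    (fun S hS => (hd₁ S t₀ hS ht₀).2.1.continuousAt) (hlim0₁ t₀ ht₀) (hlimtop₁ t₀ ht₀)
  -- cutoff A near 0
  have hA1 : {S : ℝ | V₁ S t₀ < E + m₀/4} ∈ nhdsWithin (0:ℝ) (Set.Ioi 0) :=
    (hlim0₁ t₀ ht₀) (Iio_mem_nhds (by linarith))
  obtain ⟨u, hu, husub⟩ := mem_nhdsGT_iff_exists_Ioo_subset.1 hA1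
  have hu0 : (0:ℝ) < u := mem_Ioi.1 hu
  set A := min (u/2) (m₀/4) with hAdef
  have hA0 : 0 < A := lt_min (by linarith) (by linarith)
  have hAu : A < u := lt_of_le_of_lt (min_le_left _ _) (by linarith)
  have hAm : A ≤ m₀/4 := min_le_right _ _
  -- cutoff B near ∞
  have hB1 : ∀ᶠ S in atTop, V₁ S t₀ < m₀ := (hlimtop₁ t₀ ht₀) (Iio_mem_nhds hm₀)
  obtain ⟨b, hb⟩ := hB1.exists_forall_of_atTop
  set Bc := max b (A + 1) with hBcdef
  have hAB : A < Bc := lt_of_lt_of_le (by linarith) (le_max_right _ _)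
  have hBc : ∀ S : ℝ, Bc ≤ S → V₁ S t₀ < m₀ :=
    fun S hS => hb S (le_trans (le_max_left _ _) hS)
  -- witnesses with value ≥ m₀ live in [A, Bc]
  have hwitbound : ∀ S t : ℝ, 0 < S → t₀ ≤ t → m₀ ≤ V₁ S t - V₂ S t → A ≤ S ∧ S ≤ Bc := by
    intro S t hS ht hge
    have htpos : 0 < t := lt_of_lt_of_le ht₀ ht
    have h2 : V₁ S t ≤ V₁ S t₀ := hanti₁ S hS t₀ t ht₀ ht
    constructor
    · by_contra h
      push_neg at h
      have h1 : V₁ S t₀ < E + m₀/4 := husub ⟨hS, lt_trans h hAu⟩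
      have h3 : E - S ≤ V₂ S t := le_trans (le_max_left _ _) (hobs₂ S t hS htpos)
      linarith
    · by_contra h
      push_neg at h
      have h1 : V₁ S t₀ < m₀ := hBc S (le_of_lt h)
      have h3 : (0:ℝ) ≤ V₂ S t := le_trans (le_max_right _ _) (hobs₂ S t hS htpos)
      linarith
  -- exponential barrier
  set c := r / 2 with hcdef
  have hc : 0 < c := by simp [hcdef]; linarith
  set φ : ℝ → ℝ := fun t => m₀ * Real.exp (c * (t - t₀)) with hφdef
  have hφd : ∀ t : ℝ, HasDerivAt φ (c * φ t) t := by
    intro t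
    have h := (((hasDerivAt_id t).sub_const t₀).const_mul c).exp.const_mul m₀
    simp only [id_eq] at h
    convert h using 1
    · rfl
    · rfl
    simp only [hφdef]; ring
  have hφpos : ∀ t : ℝ, 0 < φ t := fun t => mul_pos hm₀ (Real.exp_pos _)
  have hφm₀ : ∀ t : ℝ, t₀ ≤ t → m₀ ≤ φ t := by
    intro t ht
    have h1 : (1:ℝ) ≤ Real.exp (c * (t - t₀)) :=
      Real.one_le_exp (mul_nonneg (le_of_lt hc) (by linarith))
    simp only [hφdef]
    nlinarith
  set Bset : Set ℝ :=
    {t | t₀ ≤ t ∧ ∃ S, A ≤ S ∧ S ≤ Bc ∧ φ t ≤ V₁ S t - V₂ S t} with hBsetdef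
  have ht₀B : t₀ ∈ Bset := by
    have hφt₀ : φ t₀ = m₀ := by simp [hφdef]
    have hw := hwitbound S₀ t₀ hS₀ (le_refl t₀) (le_of_eq rfl)
    exact ⟨le_refl t₀, S₀, hw.1, hw.2, by rw [hφt₀]⟩
  -- propagation to the right
  have hprop : ∀ s, s ∈ Bset → ∃ δ > 0, ∀ τ, s < τ → τ < s + δ → τ ∈ Bset := by
    intro s hs
    obtain ⟨hts, Sw, hSwA, hSwB, hSwv⟩ := hs
    have hspos : 0 < s := lt_of_lt_of_le ht₀ hts
    have hcontW : ContinuousOn (fun S => V₁ S s - V₂ S s) (Icc A Bc) := by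
      intro x hx
      have hx0 : 0 < x := lt_of_lt_of_le hA0 hx.1
      exact ((hd₁ x s hx0 hspos).2.1.sub (hd₂ x s hx0 hspos).2.1).continuousAt.continuousWithinAt
    obtain ⟨Sm, hSmK, hSmmax⟩ := isCompact_Icc.exists_isMaxOn ⟨A, le_refl _, le_of_lt hAB⟩ hcontW
    have hSmpos : 0 < Sm := lt_of_lt_of_le hA0 hSmK.1
    have hWv : φ s ≤ V₁ Sm s - V₂ Sm s := le_trans hSwv (hSmmax ⟨hSwA, hSwB⟩)
    have hWvpos : 0 < V₁ Sm s - V₂ Sm s := lt_of_lt_of_le (hφpos s) hWv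
    have hglobal : ∀ x, 0 < x → V₁ x s - V₂ x s ≤ V₁ Sm s - V₂ Sm s := by
      intro x hx
      by_contra h'
      push_neg at h'
      have hge : m₀ ≤ V₁ x s - V₂ x s :=
        le_of_lt (lt_of_le_of_lt (le_trans (hφm₀ s hts) hWv) h')
      have hw := hwitbound x s hx hts hge
      exact absurd (hSmmax ⟨hw.1, hw.2⟩) (not_le.2 h')
    obtain ⟨hWS0, hWSS⟩ := max_second_order (fun x => V₁ x s - V₂ x s)
      (fun x => VS₁ x s - VS₂ x s) (fun x => VSS₁ x s - VSS₂ x s)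
      (fun x hx => ((hd₁ x s hx hspos).2.1).sub ((hd₂ x s hx hspos).2.1))
      (fun x hx => ((hd₁ x s hx hspos).2.2).sub ((hd₂ x s hx hspos).2.2)) hSmpos hglobal
    -- variational inequality at the max point
    have hpay : max (E - Sm) 0 ≤ V₂ Sm s := hobs₂ Sm s hSmpos hspos
    have hob1 : V₁ Sm s - max (E - Sm) 0 ≠ 0 := by
      have : 0 < V₁ Sm s - max (E - Sm) 0 := by linarith
      linarith
    have hL1 : negLp r q σ V₁ Vt₁ VS₁ VSS₁ Sm s = 0 := by
      rcases min_eq_iff.1 (hVI₁ Sm s hSmpos hspos) with ⟨h, _⟩ | ⟨h, _⟩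
      · exact h
      · exact absurd h hob1
    have hL2 := hL₂ Sm s hSmpos hspos
    have hVSeq : VS₁ Sm s = VS₂ Sm s := sub_eq_zero.1 hWS0
    have harith : r * (V₁ Sm s - V₂ Sm s) ≤ Vt₁ Sm s - Vt₂ Sm s := by
      simp only [negLp] at hL1 hL2
      have hσ2 : (0:ℝ) ≤ σ^2/2 * Sm^2 := by positivity
      have hprod : (0:ℝ) ≤ (σ^2/2 * Sm^2) * (VSS₂ Sm s - VSS₁ Sm s) :=
        mul_nonneg hσ2 (by linarith)
      rw [hVSeq] at hL1
      nlinarith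
    -- strictly positive derivative of the gap above the barrier
    set qf : ℝ → ℝ := fun τ => (V₁ Sm τ - V₂ Sm τ) - φ τ with hqfdef
    have hqd : HasDerivAt qf ((Vt₁ Sm s - Vt₂ Sm s) - c * φ s) s :=
      (((hd₁ Sm s hSmpos hspos).1).sub ((hd₂ Sm s hSmpos hspos).1)).sub (hφd s)
    have hq0 : 0 ≤ qf s := by simp only [hqfdef]; linarith
    have hq' : 0 < (Vt₁ Sm s - Vt₂ Sm s) - c * φ s := by
      have h1 : r * φ s ≤ r * (V₁ Sm s - V₂ Sm s) :=
        mul_le_mul_of_nonneg_left hWv (le_of_lt hr)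
      have h2 := hφpos s
      simp only [hcdef]
      nlinarith
    obtain ⟨δ, hδ, hposf⟩ := pos_after qf hqd hq0 hq'
    refine ⟨δ, hδ, fun τ hτ1 hτ2 => ?_⟩
    refine ⟨le_trans hts (le_of_lt hτ1), Sm, hSmK.1, hSmK.2, ?_⟩
    have := hposf τ hτ1 hτ2
    simp only [hqfdef] at this
    linarith
  -- every time ≥ t₀ is in Bset
  have hall : ∀ T : ℝ, t₀ ≤ T → T ∈ Bset := by
    by_contra h
    push_neg at h
    obtain ⟨T, hT, hTB⟩ := h
    set N : Set ℝ := {τ | t₀ ≤ τ ∧ τ ∉ Bset} with hNdef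
    have hNne : N.Nonempty := ⟨T, hT, hTB⟩
    have hNbdd : BddBelow N := ⟨t₀, fun τ hτ => hτ.1⟩
    set s := sInf N with hsdef
    have hst₀ : t₀ ≤ s := le_csInf hNne (fun τ hτ => hτ.1)
    have hbelow : ∀ τ, t₀ ≤ τ → τ < s → τ ∈ Bset := by
      intro τ h1 h2
      by_contra h3
      exact absurd (csInf_le hNbdd ⟨h1, h3⟩) (not_le.2 h2)
    have hspos : 0 < s := lt_of_lt_of_le ht₀ hst₀
    have hsB : s ∈ Bset := by
      rcases eq_or_lt_of_le hst₀ with heq | hlt'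
      · rw [← heq]; exact ht₀B
      · -- approximate s from the left
        set d := s - t₀ with hddef
        have hd0 : 0 < d := by simp only [hddef]; linarith
        set τn : ℕ → ℝ := fun n => s - d / (n + 2) with hτndef
        have hτlt : ∀ n : ℕ, τn n < s := by
          intro n
          have : (0:ℝ) < d / (n + 2) := by positivity
          simp only [hτndef]; linarith
        have hτge : ∀ n : ℕ, t₀ ≤ τn n := by
          intro n
          have h2 : d / (n + 2) ≤ d / 2 := by
            apply div_le_div_of_nonneg_left (le_of_lt hd0) (by norm_num)
            have : (0:ℝ) ≤ (n:ℝ) := Nat.cast_nonneg n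
            linarith
          simp only [hτndef, hddef]
          linarith
        have hτmono : Monotone τn := by
          intro i j hij
          simp only [hτndef]
          have hij' : (i:ℝ) + 2 ≤ (j:ℝ) + 2 := by
            have : (i:ℝ) ≤ (j:ℝ) := Nat.cast_le.2 hij
            linarith
          have h2 : d / ((j:ℝ) + 2) ≤ d / ((i:ℝ) + 2) :=
            div_le_div_of_nonneg_left (le_of_lt hd0) (by positivity) hij'
          linarith
        have hτtend : Tendsto τn atTop (nhds s) := by
          have h1 : Tendsto (fun n : ℕ => ((n:ℝ) + 2)) atTop atTop :=
            tendsto_atTop_add_const_right atTop 2 tendsto_natCast_atTop_atTop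
          have h2 : Tendsto (fun n : ℕ => d / ((n:ℝ) + 2)) atTop (nhds 0) :=
            Tendsto.div_atTop tendsto_const_nhds h1
          have h3 := tendsto_const_nhds.sub h2 (α := ℕ) (f := fun _ : ℕ => s)
          simpa using h3
        have hwit : ∀ n : ℕ, ∃ S, A ≤ S ∧ S ≤ Bc ∧ φ (τn n) ≤ V₁ S (τn n) - V₂ S (τn n) :=
          fun n => (hbelow (τn n) (hτge n) (hτlt n)).2
        choose Sn hSnA hSnB hSnv using hwit
        obtain ⟨Sh, hShK, ψ, hψ, hψtend⟩ :=
          isCompact_Icc.tendsto_subseq (x := Sn) (fun n => mem_Icc.2 ⟨hSnA n, hSnB n⟩)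
        have hShpos : 0 < Sh := lt_of_lt_of_le hA0 hShK.1
        refine ⟨le_of_lt hlt', Sh, hShK.1, hShK.2, ?_⟩
        refine le_of_forall_pos_le_add (fun ε hε => ?_)
        have hτψ : Tendsto (fun k => τn (ψ k)) atTop (nhds s) :=
          hτtend.comp hψ.tendsto_atTop
        -- time-continuity of V₁ at Sh
        have c1 : Tendsto (fun k => V₁ Sh (τn (ψ k))) atTop (nhds (V₁ Sh s)) :=
          ((hd₁ Sh s hShpos hspos).1.continuousAt.tendsto).comp hτψ
        have e1 : ∀ᶠ k in atTop, V₁ Sh (τn (ψ k)) < V₁ Sh s + ε/5 :=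
          c1.eventually_lt_const (by linarith)
        obtain ⟨m, hm⟩ := e1.exists_forall_of_atTop
        set tm := τn (ψ m) with htmdef
        have htmpos : 0 < tm := lt_of_lt_of_le ht₀ (hτge (ψ m))
        -- space continuity at slices tm and s
        have c2 : Tendsto (fun k => V₁ (Sn (ψ k)) tm) atTop (nhds (V₁ Sh tm)) :=
          ((hd₁ Sh tm hShpos htmpos).2.1.continuousAt.tendsto).comp hψtend
        have c3 : Tendsto (fun k => V₂ (Sn (ψ k)) s) atTop (nhds (V₂ Sh s)) :=
          ((hd₂ Sh s hShpos hspos).2.1.continuousAt.tendsto).comp hψtend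
        have c4 : Tendsto (fun k => φ (τn (ψ k))) atTop (nhds (φ s)) :=
          ((hφd s).continuousAt.tendsto).comp hτψ
        have e2 : ∀ᶠ k in atTop, V₁ (Sn (ψ k)) tm < V₁ Sh tm + ε/5 :=
          c2.eventually_lt_const (by linarith)
        have e3 : ∀ᶠ k in atTop, V₂ Sh s - ε/5 < V₂ (Sn (ψ k)) s :=
          c3.eventually_const_lt (by linarith)
        have e4 : ∀ᶠ k in atTop, φ s - ε/5 < φ (τn (ψ k)) :=
          c4.eventually_const_lt (by linarith)
        obtain ⟨k, hk2, hk3, hk4, hkm⟩ := (e2.and (e3.and (e4.and (eventually_ge_atTop m)))).exists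
        have hτ'pos : 0 < τn (ψ k) := lt_of_lt_of_le ht₀ (hτge (ψ k))
        have htmle : tm ≤ τn (ψ k) := hτmono (hψ.monotone hkm)
        have h1 : φ (τn (ψ k)) ≤ V₁ (Sn (ψ k)) (τn (ψ k)) - V₂ (Sn (ψ k)) (τn (ψ k)) :=
          hSnv (ψ k)
        have hSnpos : 0 < Sn (ψ k) := lt_of_lt_of_le hA0 (hSnA (ψ k))
        have h2 : V₁ (Sn (ψ k)) (τn (ψ k)) ≤ V₁ (Sn (ψ k)) tm :=
          hanti₁ _ hSnpos tm _ htmpos htmle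
        have h3 : V₂ (Sn (ψ k)) s ≤ V₂ (Sn (ψ k)) (τn (ψ k)) :=
          hanti₂ _ hSnpos _ s hτ'pos (le_of_lt (hτlt (ψ k)))
        have h4 : V₁ Sh tm < V₁ Sh s + ε/5 := hm m (le_refl m)
        linarith
    obtain ⟨δ, hδ, hpr⟩ := hprop s hsB
    have hlb : ∀ τ ∈ N, s + δ/2 ≤ τ := by
      intro τ hτ
      have h1 : s ≤ τ := csInf_le hNbdd hτ
      by_contra h2
      push_neg at h2
      rcases eq_or_lt_of_le h1 with heq | hlt'
      · exact hτ.2 (heq ▸ hsB)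
      · exact hτ.2 (hpr τ hlt' (by linarith))
    have := le_csInf hNne hlb
    rw [← hsdef] at this
    linarith
  -- final contradiction: the barrier exceeds the global bound
  have hφtop : Tendsto φ atTop atTop := by
    have h1 : Tendsto (fun t : ℝ => t - t₀) atTop atTop :=
      tendsto_atTop_add_const_right atTop (-t₀) tendsto_id
    have h2 : Tendsto (fun t : ℝ => c * (t - t₀)) atTop atTop := h1.const_mul_atTop hc
    have h3 : Tendsto (fun t : ℝ => Real.exp (c * (t - t₀))) atTop atTop :=
      Real.tendsto_exp_atTop.comp h2
    exact h3.const_mul_atTop hm₀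
  obtain ⟨T, hT1, hT2⟩ := ((hφtop.eventually_gt_atTop M).and (eventually_ge_atTop t₀)).exists
  obtain ⟨_, S, hSA, hSB, hSv⟩ := hall T hT2
  have hSpos : 0 < S := lt_of_lt_of_le hA0 hSA
  have hTpos : 0 < T := lt_of_lt_of_le ht₀ hT2
  have h1 : V₁ S T ≤ V₁ S t₀ := hanti₁ S hSpos t₀ T ht₀ hT2
  have h2 : V₁ S t₀ ≤ M := hM S hSpos
  have h3 : (0:ℝ) ≤ V₂ S T := le_trans (le_max_right _ _) (hobs₂ S T hSpos hTpos)
  linarith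


/-- Uniqueness of the time-decreasing solution of the time-dependent variational
inequality for the perpetual American put: two positive, time-nonincreasing solutions
with boundary behaviour `V(S,t) → E` as `S → 0⁺` and `V(S,t) → 0` as `S → +∞` for every
fixed `t > 0` coincide on `(0,∞) × (0,∞)`. -/
theorem uniqueness_time_dependent_perpetual_put_VI
    (r q σ E : ℝ) (hr : 0 < r) (hq : 0 ≤ q) (hσ : 0 < σ) (hE : 0 < E)
    (V₁ Vt₁ VS₁ VSS₁ V₂ Vt₂ VS₂ VSS₂ : ℝ → ℝ → ℝ)
    (hd₁ : ∀ S t : ℝ, 0 < S → 0 < t →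
      HasDerivAt (fun τ => V₁ S τ) (Vt₁ S t) t ∧
      HasDerivAt (fun s => V₁ s t) (VS₁ S t) S ∧
      HasDerivAt (fun s => VS₁ s t) (VSS₁ S t) S)
    (hd₂ : ∀ S t : ℝ, 0 < S → 0 < t →
      HasDerivAt (fun τ => V₂ S τ) (Vt₂ S t) t ∧
      HasDerivAt (fun s => V₂ s t) (VS₂ S t) S ∧
      HasDerivAt (fun s => VS₂ s t) (VSS₂ S t) S)
    (hpos₁ : ∀ S t : ℝ, 0 < S → 0 < t → 0 < V₁ S t)
    (hpos₂ : ∀ S t : ℝ, 0 < S → 0 < t → 0 < V₂ S t)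
    (hdec₁ : ∀ S t : ℝ, 0 < S → 0 < t → Vt₁ S t ≤ 0)
    (hdec₂ : ∀ S t : ℝ, 0 < S → 0 < t → Vt₂ S t ≤ 0)
    (hVI₁ : ∀ S t : ℝ, 0 < S → 0 < t →
      min (negLp r q σ V₁ Vt₁ VS₁ VSS₁ S t) (V₁ S t - max (E - S) 0) = 0)
    (hVI₂ : ∀ S t : ℝ, 0 < S → 0 < t →
      min (negLp r q σ V₂ Vt₂ VS₂ VSS₂ S t) (V₂ S t - max (E - S) 0) = 0)
    (hlim0₁ : ∀ t : ℝ, 0 < t →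
      Filter.Tendsto (fun S => V₁ S t) (nhdsWithin 0 (Set.Ioi 0)) (nhds E))
    (hlim0₂ : ∀ t : ℝ, 0 < t →
      Filter.Tendsto (fun S => V₂ S t) (nhdsWithin 0 (Set.Ioi 0)) (nhds E))
    (hlimtop₁ : ∀ t : ℝ, 0 < t →
      Filter.Tendsto (fun S => V₁ S t) Filter.atTop (nhds 0))
    (hlimtop₂ : ∀ t : ℝ, 0 < t →
      Filter.Tendsto (fun S => V₂ S t) Filter.atTop (nhds 0)) :
    ∀ S t : ℝ, 0 < S → 0 < t → V₁ S t = V₂ S t := by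
  intro S t hS ht
  exact le_antisymm
    (key_le r q σ E hr V₁ Vt₁ VS₁ VSS₁ V₂ Vt₂ VS₂ VSS₂ hd₁ hd₂ hdec₁ hdec₂ hVI₁ hVI₂
      hlim0₁ hlimtop₁ S t hS ht)
    (key_le r q σ E hr V₂ Vt₂ VS₂ VSS₂ V₁ Vt₁ VS₁ VSS₁ hd₂ hd₁ hdec₂ hdec₁ hVI₂ hVI₁
      hlim0₂ hlimtop₂ S t hS ht)
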